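/- The dual code of RM(r, m) equals RM(m-r-1, m), for 0 <= r <= m-1. -/

import Mathlib

open scoped BigOperators

/-- The evaluation point `ρ(j) ∈ F₂^m`. -/
def rho (m : ℕ) (j : Fin (2^m)) : Fin m → ZMod 2 :=
  fun i => if Nat.testBit (j : ℕ) (m - 1 - i.val) then 1 else 0

/-- The evaluation vector of a polynomial over all points of `F₂^m`. -/
noncomputable def evalVec (m : ℕ) (f : MvPolynomial (Fin m) (ZMod 2)) :
    Fin (2^m) → ZMod 2 :=
  fun j => MvPolynomial.eval (rho m j) f

/-- The Reed-Muller code `RM(r, m)` as a subspace of `F₂^{2^m}`. -/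
noncomputable def RM (m r : ℕ) : Submodule (ZMod 2) (Fin (2^m) → ZMod 2) :=
  Submodule.span (ZMod 2)
    {v | ∃ f : MvPolynomial (Fin m) (ZMod 2), f.totalDegree ≤ r ∧ evalVec m f = v}

/-- The dual code of a linear code of length `n` over `F₂`, w.r.t. the standard
bilinear form. -/
def dualCode {n : ℕ} (C : Submodule (ZMod 2) (Fin n → ZMod 2)) :
    Submodule (ZMod 2) (Fin n → ZMod 2) where
  carrier := {v | ∀ c ∈ C, ∑ i, v i * c i = 0}
  add_mem' := by
    intro a b ha hb c hc
    simp only [Set.mem_setOf_eq, Pi.add_apply, add_mul, Finset.sum_add_distrib,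
      ha c hc, hb c hc, add_zero]
  zero_mem' := by
    intro c hc
    simp
  smul_mem' := by
    intro t a ha c hc
    simp only [Set.mem_setOf_eq, Pi.smul_apply, smul_eq_mul, mul_assoc,
      ← Finset.mul_sum, ha c hc, mul_zero]

open MvPolynomial Finset

lemma rho_injective (m : ℕ) : Function.Injective (rho m) := by
  intro j k h
  have hj : (j : ℕ) < 2 ^ m := j.2
  have hk : (k : ℕ) < 2 ^ m := k.2
  have hjk : (j : ℕ) = (k : ℕ) := by
    apply Nat.eq_of_testBit_eq
    intro i
    by_cases him : i < m
    · have h1 : m - 1 - (m - 1 - i) = i := by omega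
      have h2 := congrFun h ⟨m - 1 - i, by omega⟩
      simp only [rho, h1] at h2
      rcases Bool.eq_false_or_eq_true (Nat.testBit (j : ℕ) i) with hb | hb <;>
        rcases Bool.eq_false_or_eq_true (Nat.testBit (k : ℕ) i) with hb' | hb' <;>
        simp [hb, hb'] at h2 ⊢
    · rw [Nat.testBit_lt_two_pow (lt_of_lt_of_le hj (Nat.pow_le_pow_right (by norm_num) (by omega))),
        Nat.testBit_lt_two_pow (lt_of_lt_of_le hk (Nat.pow_le_pow_right (by norm_num) (by omega)))]
  exact Fin.ext hjk

lemma rho_bijective (m : ℕ) : Function.Bijective (rho m) := by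
  rw [Fintype.bijective_iff_injective_and_card]
  refine ⟨rho_injective m, ?_⟩
  simp [ZMod.card]

lemma sum_rho (m : ℕ) (F : (Fin m → ZMod 2) → ZMod 2) :
    ∑ j : Fin (2 ^ m), F (rho m j) = ∑ x : Fin m → ZMod 2, F x :=
  Fintype.sum_bijective (rho m) (rho_bijective m) _ _ (fun _ => rfl)

lemma sum_pow_zmod2 (n : ℕ) : ∑ a : ZMod 2, a ^ n = if n = 0 then 0 else 1 := by
  cases n with
  | zero => decide
  | succ k =>
    have h : ∀ a : ZMod 2, a ^ (k + 1) = a := by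
      intro a; rcases (by decide : ∀ b : ZMod 2, b = 0 ∨ b = 1) a with rfl | rfl <;> simp
    simp only [h]
    rw [if_neg (Nat.succ_ne_zero k)]
    decide

lemma sum_eval_monomial (m : ℕ) (d : Fin m →₀ ℕ) (c : ZMod 2) :
    ∑ x : Fin m → ZMod 2, MvPolynomial.eval x (MvPolynomial.monomial d c)
      = if ∀ i, 1 ≤ d i then c else 0 := by
  have h1 : ∀ x : Fin m → ZMod 2,
      MvPolynomial.eval x (MvPolynomial.monomial d c) = c * ∏ i, x i ^ d i := by
    intro x
    rw [eval_monomial]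
    congr 1
    exact Finsupp.prod_fintype _ _ (fun i => pow_zero (x i))
  simp only [h1, ← Finset.mul_sum]
  have h2 : (∑ x : Fin m → ZMod 2, ∏ i, x i ^ d i)
      = ∏ i : Fin m, ∑ a : ZMod 2, a ^ d i := by
    rw [← Finset.sum_prod_piFinset Finset.univ (fun i a => a ^ d i)]
    rw [Fintype.piFinset_univ]
  rw [h2]
  simp only [sum_pow_zmod2]
  by_cases hall : ∀ i, 1 ≤ d i
  · rw [if_pos hall, Finset.prod_eq_one, mul_one]
    intro i _
    rw [if_neg (by have := hall i; omega)]
  · rw [if_neg hall, mul_eq_zero]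
    right
    push_neg at hall
    obtain ⟨i, hi⟩ := hall
    exact Finset.prod_eq_zero (Finset.mem_univ i) (by rw [if_pos (by omega)])

lemma sum_eval (m : ℕ) (g : MvPolynomial (Fin m) (ZMod 2)) :
    ∑ x : Fin m → ZMod 2, MvPolynomial.eval x g
      = ∑ d ∈ g.support, if ∀ i, 1 ≤ d i then g.coeff d else 0 := by
  have hg : ∀ x : Fin m → ZMod 2, MvPolynomial.eval x g
      = ∑ d ∈ g.support, MvPolynomial.eval x (MvPolynomial.monomial d (g.coeff d)) := by
    intro x
    conv_lhs => rw [g.as_sum]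
    rw [map_sum]
  simp only [hg]
  rw [Finset.sum_comm]
  exact Finset.sum_congr rfl fun d _ => sum_eval_monomial m d _

lemma sum_eval_eq_zero {m : ℕ} {g : MvPolynomial (Fin m) (ZMod 2)}
    (h : g.totalDegree < m) : ∑ x : Fin m → ZMod 2, MvPolynomial.eval x g = 0 := by
  rw [sum_eval]
  apply Finset.sum_eq_zero
  intro d hd
  rw [if_neg]
  intro hall
  have h1 : m ≤ d.sum fun _ e => e := by
    calc m = ∑ _i : Fin m, 1 := by simp
    _ ≤ ∑ i : Fin m, d i := Finset.sum_le_sum fun i _ => hall i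
    _ = d.sum fun _ e => e := (Finsupp.sum_fintype d (fun _ e => e) (fun _ => rfl)).symm
  have h2 := MvPolynomial.le_totalDegree hd
  omega

lemma pairing (m : ℕ) (f g : MvPolynomial (Fin m) (ZMod 2)) :
    ∑ j, evalVec m f j * evalVec m g j = ∑ x : Fin m → ZMod 2, MvPolynomial.eval x (f * g) := by
  rw [← sum_rho m (fun x => MvPolynomial.eval x (f * g))]
  exact Finset.sum_congr rfl fun j _ => (map_mul _ _ _).symm

lemma mem_dualCode_span_iff {n : ℕ} (S : Set (Fin n → ZMod 2)) (v : Fin n → ZMod 2) :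
    v ∈ dualCode (Submodule.span (ZMod 2) S) ↔ ∀ s ∈ S, ∑ i, v i * s i = 0 := by
  constructor
  · intro h s hs
    exact h s (Submodule.subset_span hs)
  · intro h c hc
    induction hc using Submodule.span_induction with
    | mem x hx => exact h x hx
    | zero => simp
    | add x y _ _ hx hy =>
      simp only [Pi.add_apply, mul_add, Finset.sum_add_distrib, hx, hy, add_zero]
    | smul t x _ hx =>
      simp only [Pi.smul_apply, smul_eq_mul, mul_left_comm, ← Finset.mul_sum, hx, mul_zero]

noncomputable def deltaPoly (m : ℕ) (a : Fin m → ZMod 2) : MvPolynomial (Fin m) (ZMod 2) :=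
  ∏ i, (MvPolynomial.X i + MvPolynomial.C (a i) + 1)

lemma eval_deltaPoly (m : ℕ) (a x : Fin m → ZMod 2) :
    MvPolynomial.eval x (deltaPoly m a) = if x = a then 1 else 0 := by
  rw [deltaPoly, map_prod]
  by_cases h : x = a
  · subst h
    rw [if_pos rfl]
    apply Finset.prod_eq_one
    intro i _
    simp only [map_add, eval_X, eval_C, map_one]
    have : ∀ u : ZMod 2, u + u + 1 = 1 := by decide
    exact this (x i)
  · rw [if_neg h]
    obtain ⟨i, hi⟩ := Function.ne_iff.mp h
    apply Finset.prod_eq_zero (Finset.mem_univ i)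
    simp only [map_add, eval_X, eval_C, map_one]
    have : ∀ u v : ZMod 2, u ≠ v → u + v + 1 = 0 := by decide
    exact this _ _ hi

noncomputable def interp (m : ℕ) (v : Fin (2 ^ m) → ZMod 2) : MvPolynomial (Fin m) (ZMod 2) :=
  ∑ j, v j • deltaPoly m (rho m j)

lemma evalVec_interp (m : ℕ) (v : Fin (2 ^ m) → ZMod 2) : evalVec m (interp m v) = v := by
  funext k
  simp only [evalVec, interp, map_sum, MvPolynomial.smul_eval, eval_deltaPoly]
  have h : ∀ j : Fin (2 ^ m), (rho m k = rho m j) = (k = j) :=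
    fun j => propext ⟨fun h => rho_injective m h, fun h => h ▸ rfl⟩
  simp only [h, smul_eq_mul, mul_ite, mul_one, mul_zero]
  rw [Finset.sum_ite_eq Finset.univ k v]
  simp

lemma degreeOf_deltaPoly (m : ℕ) (a : Fin m → ZMod 2) (i : Fin m) :
    MvPolynomial.degreeOf i (deltaPoly m a) ≤ 1 := by
  refine le_trans (MvPolynomial.degreeOf_prod_le i Finset.univ _) ?_
  have h : ∀ i' : Fin m,
      MvPolynomial.degreeOf i (MvPolynomial.X i' + MvPolynomial.C (a i') + 1)
        ≤ if i = i' then 1 else 0 := by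
    intro i'
    refine le_trans (MvPolynomial.degreeOf_add_le _ _ _) ?_
    rw [max_le_iff]
    constructor
    · refine le_trans (MvPolynomial.degreeOf_add_le _ _ _) ?_
      rw [max_le_iff]
      refine ⟨?_, by simp [MvPolynomial.degreeOf_C]⟩
      rw [MvPolynomial.degreeOf_X]
    · have : (1 : MvPolynomial (Fin m) (ZMod 2)) = MvPolynomial.C 1 := by simp
      rw [this, MvPolynomial.degreeOf_C]
      positivity
  refine le_trans (Finset.sum_le_sum fun i' _ => h i') ?_
  simp

lemma interp_multilinear (m : ℕ) (v : Fin (2 ^ m) → ZMod 2) :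
    ∀ d ∈ (interp m v).support, ∀ i, d i ≤ 1 := by
  intro d hd i
  have h1 := MvPolynomial.support_sum hd
  obtain ⟨j, _, hj⟩ := Finset.mem_biUnion.mp h1
  have h2 : d ∈ (deltaPoly m (rho m j)).support := MvPolynomial.support_smul hj
  exact le_trans (MvPolynomial.monomial_le_degreeOf i h2) (degreeOf_deltaPoly m _ i)

/-- The dual code of `RM(r, m)` is `RM(m-r-1, m)`, for `0 ≤ r ≤ m-1`. -/
theorem RM_dual (m r : ℕ) (hm : 1 ≤ m) (hr : r ≤ m - 1) :
    dualCode (RM m r) = RM m (m - r - 1) := by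
  apply le_antisymm
  · -- dual(RM r) ≤ RM(m-r-1)
    intro v hv
    set g := interp m v with hgdef
    have hML := interp_multilinear m v
    have hvg : evalVec m g = v := evalVec_interp m v
    have hkey : ∀ d ∈ g.support, (d.sum fun _ e => e) ≤ m - r - 1 := by
      by_contra hcon
      push_neg at hcon
      obtain ⟨d0, hd0, hd0big⟩ := hcon
      have hsumcard : ∀ d ∈ g.support, (d.sum fun _ e => e) = d.support.card := by
        intro d hd
        rw [Finsupp.sum, Finset.card_eq_sum_ones]
        apply Finset.sum_congr rfl
        intro i hi
        have h1 := hML d hd i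
        have h2 : d i ≠ 0 := Finsupp.mem_support_iff.mp hi
        omega
      set T := g.support.filter (fun d => m - r ≤ d.support.card) with hT
      have hTne : T.Nonempty :=
        ⟨d0, Finset.mem_filter.mpr ⟨hd0, by have := hsumcard d0 hd0; omega⟩⟩
      obtain ⟨d, hdT, hdmax⟩ := Finset.exists_max_image T (fun d => d.support.card) hTne
      have hdg : d ∈ g.support := (Finset.mem_filter.mp hdT).1
      have hdcard : m - r ≤ d.support.card := (Finset.mem_filter.mp hdT).2
      have hdcardm : d.support.card ≤ m := by
        simpa using Finset.card_le_card (Finset.subset_univ d.support)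
      set F : Fin m →₀ ℕ := ∑ i ∈ d.supportᶜ, Finsupp.single i 1 with hF
      have hFapp : ∀ i, F i = if i ∈ d.supportᶜ then 1 else 0 := by
        intro i
        rw [hF, Finset.sum_apply']
        simp_rw [Finsupp.single_apply]
        rw [Finset.sum_ite_eq' d.supportᶜ i (fun _ => 1)]
      set f : MvPolynomial (Fin m) (ZMod 2) := MvPolynomial.monomial F 1 with hf
      have hdegf : f.totalDegree ≤ r := by
        rw [hf, MvPolynomial.totalDegree_monomial F one_ne_zero]
        have h1 : (F.sum fun _ e => e) = ∑ i : Fin m, F i :=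
          Finsupp.sum_fintype F (fun _ e => e) (fun _ => rfl)
        rw [h1]
        simp only [hFapp]
        rw [Finset.sum_ite_mem]
        rw [Finset.univ_inter, Finset.sum_const, smul_eq_mul, mul_one]
        rw [Finset.card_compl]
        simp only [Fintype.card_fin]
        omega
      have hmem : evalVec m f ∈ RM m r := Submodule.subset_span ⟨f, hdegf, rfl⟩
      have hortho : ∑ i, v i * evalVec m f i = 0 := hv (evalVec m f) hmem
      have hgf : g * f = ∑ e ∈ g.support, MvPolynomial.monomial (e + F) (g.coeff e) := by
        conv_lhs => rw [g.as_sum]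
        rw [hf, Finset.sum_mul]
        apply Finset.sum_congr rfl
        intro e _
        rw [MvPolynomial.monomial_mul, mul_one]
      have hexp : ∑ x : Fin m → ZMod 2, MvPolynomial.eval x (g * f)
          = ∑ e ∈ g.support, (if ∀ i, 1 ≤ e i + F i then g.coeff e else 0) := by
        rw [hgf]
        simp only [map_sum]
        rw [Finset.sum_comm]
        apply Finset.sum_congr rfl
        intro e _
        rw [sum_eval_monomial]
        simp only [Finsupp.add_apply]
        exact if_congr Iff.rfl rfl rfl
      have hcond : ∀ e ∈ g.support, (∀ i, 1 ≤ e i + F i) ↔ d.support ⊆ e.support := by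
        intro e _
        constructor
        · intro hall i hi
          have h1 := hall i
          rw [hFapp i, if_neg (fun h => (Finset.mem_compl.mp h) hi)] at h1
          exact Finsupp.mem_support_iff.mpr (by omega)
        · intro hsub i
          by_cases hi : i ∈ d.support
          · have h1 := Finsupp.mem_support_iff.mp (hsub hi)
            omega
          · rw [hFapp i, if_pos (Finset.mem_compl.mpr hi)]
            omega
      have hsum : (∑ e ∈ g.support, (if ∀ i, 1 ≤ e i + F i then g.coeff e else 0))
          = g.coeff d := by
        rw [Finset.sum_eq_single_of_mem d hdg]
        · exact if_pos ((hcond d hdg).mpr (Finset.Subset.refl _))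
        · intro e he hne
          rw [if_neg]
          intro hall
          have hsub := (hcond e he).mp hall
          have hcard : e.support.card ≤ d.support.card :=
            hdmax e (Finset.mem_filter.mpr
              ⟨he, le_trans hdcard (Finset.card_le_card hsub)⟩)
          have heq : d.support = e.support := Finset.eq_of_subset_of_card_le hsub hcard
          apply hne
          ext i
          have h1 := hML e he i
          have h2 := hML d hdg i
          by_cases hi : i ∈ d.support
          · have hie : i ∈ e.support := heq ▸ hi
            have h3 := Finsupp.mem_support_iff.mp hi
            have h4 := Finsupp.mem_support_iff.mp hie
            omega
          · have hie : i ∉ e.support := heq ▸ hi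
            have h3 := Finsupp.notMem_support_iff.mp hi
            have h4 := Finsupp.notMem_support_iff.mp hie
            omega
      have hzero : g.coeff d = 0 := by
        rw [← hsum, ← hexp, ← pairing m g f]
        calc ∑ j, evalVec m g j * evalVec m f j
            = ∑ j, v j * evalVec m f j := by rw [hvg]
          _ = 0 := hortho
      exact (MvPolynomial.mem_support_iff.mp hdg) hzero
    have hdeg : g.totalDegree ≤ m - r - 1 := by
      rw [MvPolynomial.totalDegree]
      exact Finset.sup_le hkey
    exact Submodule.subset_span ⟨g, hdeg, hvg⟩
  · -- RM(m-r-1) ≤ dual(RM r)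
    rw [RM, RM]
    apply Submodule.span_le.mpr
    rintro v ⟨g, hg, rfl⟩
    rw [SetLike.mem_coe, mem_dualCode_span_iff]
    rintro s ⟨f, hf, rfl⟩
    rw [pairing m g f]
    apply _root_.sum_eval_eq_zero
    have h1 := MvPolynomial.totalDegree_mul g f
    omega
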